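/- Let K be a nonempty compact subset of ℝᴺ, let f : K × ℝ → ℝ be continuous, and define F(x,u) := ∫₀ᵘ f(x,s) ds. Assume there exists μ > 4 such that 0 < μ F(x,u) ≤ u f(x,u) for all u ≠ 0 and all x ∈ K. Then there exist constants c₁ > 0 and c₂ > 0 such that F(x,u) ≥ c₁|u|^μ − c₂ for all (x,u) ∈ K × ℝ. -/

import Mathlib

open Metric Set Filter Topology intervalIntegral

lemma AR_key {μ : ℝ} {φ ψ : ℝ → ℝ}
    (hd : ∀ v : ℝ, 1 ≤ v → HasDerivAt φ (ψ v) v)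
    (hAR : ∀ v : ℝ, 1 ≤ v → μ * φ v ≤ v * ψ v) :
    ∀ v : ℝ, 1 ≤ v → φ 1 * v ^ μ ≤ φ v := by
  have hH : ∀ v ∈ Ici (1:ℝ), HasDerivAt (fun v : ℝ => φ v * v ^ (-μ))
      (v ^ (-μ - 1) * (v * ψ v - μ * φ v)) v := by
    intro v hv
    have hv0 : (0:ℝ) < v := zero_lt_one.trans_le hv
    have h1 : HasDerivAt (fun v : ℝ => v ^ (-μ)) (-μ * v ^ (-μ - 1)) v :=
      Real.hasDerivAt_rpow_const (Or.inl hv0.ne')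
    have h2 := (hd v hv).mul h1
    refine h2.congr_deriv ?_
    have hvv : v ^ (-μ) = v ^ (-μ - 1) * v := by
      rw [← Real.rpow_add_one hv0.ne']; ring_nf
    rw [hvv]; ring
  have hmono : MonotoneOn (fun v : ℝ => φ v * v ^ (-μ)) (Ici 1) := by
    apply monotoneOn_of_deriv_nonneg (convex_Ici 1)
    · exact fun v hv => (hH v hv).continuousAt.continuousWithinAt
    · intro v hv
      rw [interior_Ici] at hv
      exact (hH v (mem_Ici.2 hv.le)).differentiableAt.differentiableWithinAt
    · intro v hv
      rw [interior_Ici] at hv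
      rw [(hH v (mem_Ici.2 hv.le)).deriv]
      have hv0 : (0:ℝ) < v := zero_lt_one.trans hv
      exact mul_nonneg (Real.rpow_pos_of_pos hv0 _).le
        (sub_nonneg.2 (hAR v hv.le))
  intro v hv
  have hv0 : (0:ℝ) < v := zero_lt_one.trans_le hv
  have h := hmono self_mem_Ici hv hv
  simp only [Real.one_rpow, mul_one] at h
  have hpow : (0:ℝ) < v ^ μ := Real.rpow_pos_of_pos hv0 μ
  calc φ 1 * v ^ μ ≤ (φ v * v ^ (-μ)) * v ^ μ :=
        mul_le_mul_of_nonneg_right h hpow.le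
    _ = φ v := by rw [mul_assoc, ← Real.rpow_add hv0]; simp

/-- Superquadratic growth of the primitive `F` under the Ambrosetti–Rabinowitz
condition (f₃). -/
theorem AR_growth_estimate
    {N : ℕ} (K : Set (EuclideanSpace ℝ (Fin N)))
    (hKne : K.Nonempty) (hKcpt : IsCompact K)
    (f : EuclideanSpace ℝ (Fin N) → ℝ → ℝ)
    (hfcont : ContinuousOn (fun p : EuclideanSpace ℝ (Fin N) × ℝ => f p.1 p.2)
      (K ×ˢ univ))
    (F : EuclideanSpace ℝ (Fin N) → ℝ → ℝ)
    (hF : ∀ x u, F x u = ∫ s in (0 : ℝ)..u, f x s)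
    (μ : ℝ) (hμ : 4 < μ)
    (hAR : ∀ x ∈ K, ∀ u : ℝ, u ≠ 0 →
      0 < μ * F x u ∧ μ * F x u ≤ u * f x u) :
    ∃ c₁ : ℝ, 0 < c₁ ∧ ∃ c₂ : ℝ, 0 < c₂ ∧
      ∀ x ∈ K, ∀ u : ℝ, c₁ * |u| ^ μ - c₂ ≤ F x u := by
  have hμ0 : (0:ℝ) < μ := by linarith
  -- Tietze extension of f to the whole space
  have hsclosed : IsClosed (K ×ˢ (univ : Set ℝ)) :=
    hKcpt.isClosed.prod isClosed_univ
  set s : Set (EuclideanSpace ℝ (Fin N) × ℝ) := K ×ˢ (univ : Set ℝ) with hs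
  obtain ⟨g, hg⟩ := ContinuousMap.exists_restrict_eq (Y := ℝ) hsclosed
    ⟨s.restrict (fun p => f p.1 p.2), hfcont.restrict⟩
  have hgf : ∀ x ∈ K, ∀ u : ℝ, g (x, u) = f x u := by
    intro x hx u
    have := DFunLike.congr_fun hg ⟨(x, u), by simp [hs, hx]⟩
    exact this
  -- positivity of F off zero
  have hFpos : ∀ x ∈ K, ∀ u : ℝ, u ≠ 0 → 0 < F x u := by
    intro x hx u hu
    have h := (hAR x hx u hu).1
    nlinarith
  have hFnonneg : ∀ x ∈ K, ∀ u : ℝ, 0 ≤ F x u := by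
    intro x hx u
    rcases eq_or_ne u 0 with rfl | hu
    · simp [hF]
    · exact (hFpos x hx u hu).le
  -- derivative of F in u
  have hderiv : ∀ x ∈ K, ∀ u : ℝ, HasDerivAt (F x) (f x u) u := by
    intro x hx u
    have hgc : Continuous (fun t : ℝ => g (x, t)) :=
      g.continuous.comp (by continuity)
    have h1 : HasDerivAt (fun u : ℝ => ∫ t in (0:ℝ)..u, g (x, t)) (g (x, u)) u :=
      integral_hasDerivAt_right (hgc.intervalIntegrable _ _)
        (hgc.stronglyMeasurable.stronglyMeasurableAtFilter) hgc.continuousAt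
    have hFe : F x = fun u : ℝ => ∫ t in (0:ℝ)..u, g (x, t) := by
      funext u
      rw [hF]
      exact intervalIntegral.integral_congr fun t _ => (hgf x hx t).symm
    rw [hFe, ← hgf x hx u]
    exact h1
  -- continuous minorant
  set m : EuclideanSpace ℝ (Fin N) → ℝ :=
    fun x => min (∫ t in (0:ℝ)..(1:ℝ), g (x, t)) (∫ t in (0:ℝ)..(-1:ℝ), g (x, t))
    with hm
  have hmcont : Continuous m := by
    apply Continuous.min
    · exact intervalIntegral.continuous_parametric_intervalIntegral_of_continuous'
        (f := fun x t => g (x, t)) (by exact g.continuous) 0 1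
    · exact intervalIntegral.continuous_parametric_intervalIntegral_of_continuous'
        (f := fun x t => g (x, t)) (by exact g.continuous) 0 (-1)
  have hmeq : ∀ x ∈ K, m x = min (F x 1) (F x (-1)) := by
    intro x hx
    have e1 : (∫ t in (0:ℝ)..(1:ℝ), g (x, t)) = F x 1 := by
      rw [hF]; exact intervalIntegral.integral_congr fun t _ => hgf x hx t
    have e2 : (∫ t in (0:ℝ)..(-1:ℝ), g (x, t)) = F x (-1) := by
      rw [hF]; exact intervalIntegral.integral_congr fun t _ => hgf x hx t
    rw [hm]
    dsimp only
    rw [e1, e2]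
  obtain ⟨x₀, hx₀, hmin⟩ := hKcpt.exists_isMinOn hKne hmcont.continuousOn
  set c : ℝ := m x₀ with hc
  have hcpos : 0 < c := by
    rw [hc, hmeq x₀ hx₀]
    exact lt_min (hFpos x₀ hx₀ 1 one_ne_zero) (hFpos x₀ hx₀ (-1) (by norm_num))
  have hcle : ∀ x ∈ K, c ≤ F x 1 ∧ c ≤ F x (-1) := by
    intro x hx
    have h0 : m x₀ ≤ m x := hmin hx
    rw [hmeq x hx] at h0
    exact ⟨h0.trans (min_le_left _ _), h0.trans (min_le_right _ _)⟩
  refine ⟨c, hcpos, c, hcpos, fun x hx u => ?_⟩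
  rcases le_or_gt (|u|) 1 with h1 | h1
  · have : |u| ^ μ ≤ 1 := Real.rpow_le_one (abs_nonneg u) h1 hμ0.le
    have h2 : c * |u| ^ μ - c ≤ 0 := by nlinarith
    exact h2.trans (hFnonneg x hx u)
  · rcases le_or_gt 0 u with hu0 | hu0
    · -- u ≥ 1
      have hu1 : 1 ≤ u := le_of_lt (by rwa [abs_of_nonneg hu0] at h1)
      have hkey := AR_key (φ := F x) (ψ := f x)
        (fun v hv => hderiv x hx v)
        (fun v hv => (hAR x hx v (zero_lt_one.trans_le hv).ne').2) u hu1
      have hpow : (0:ℝ) < u ^ μ :=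
        Real.rpow_pos_of_pos (zero_lt_one.trans_le hu1) μ
      have hc1 := (hcle x hx).1
      rw [abs_of_nonneg hu0]
      nlinarith
    · -- u ≤ -1
      have hu1 : 1 ≤ -u := le_of_lt (by rwa [abs_of_neg hu0] at h1)
      have hkey := AR_key (φ := fun v => F x (-v)) (ψ := fun v => -(f x (-v)))
        (fun v hv => by
          have h := (hderiv x hx (-v)).comp v (hasDerivAt_neg v)
          exact h.congr_deriv (by ring))
        (fun v hv => by
          have hvne : (-v : ℝ) ≠ 0 := by
            have : (0:ℝ) < v := zero_lt_one.trans_le hv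
            simp [this.ne']
          have h := (hAR x hx (-v) hvne).2
          calc μ * F x (-v) ≤ -v * f x (-v) := h
            _ = v * -(f x (-v)) := by ring) (-u) hu1
      simp only [neg_neg] at hkey
      have hpow : (0:ℝ) < (-u) ^ μ :=
        Real.rpow_pos_of_pos (zero_lt_one.trans_le hu1) μ
      have hc1 := (hcle x hx).2
      rw [abs_of_neg hu0]
      nlinarith
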